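/- arXiv:2205.07876 — 2 statements merged into one kernel-verified Lean document; each statement's English description precedes it below -/
import Mathlib

section
/- For the Vilenkin-Fejér kernels at e₀ = (1,0,0,…): |K_{M_k}^ψ(e₀)| = 1/(2 sin(π/m₀)) ≥ 1/2 for every k ∈ ℕ₊; hence condition (A4), lim_n sup_{G_m \ I_N} |Φ_n| = 0, fails for the family {K_{M_k}^ψ}. -/
open MeasureTheory Filter Complex

/-- The (bounded) Vilenkin group `G_m = ∏_k Z_{m_k}`. -/
abbrev VilGroup (m : ℕ → ℕ) : Type := Π k, ZMod (m k)

/-- The generalized powers `M_0 = 1`, `M_{k+1} = m_k M_k`. -/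
def Mgen (m : ℕ → ℕ) : ℕ → ℕ
  | 0 => 1
  | k + 1 => m k * Mgen m k

/-- The `j`-th digit of `n` in the `M`-adic (mixed radix) number system. -/
def vDigit (m : ℕ → ℕ) (n j : ℕ) : ℕ := (n / Mgen m j) % m j

/-- The generalized Rademacher functions `r_k(x) = exp(2πi x_k / m_k)`. -/
noncomputable def rademacher (m : ℕ → ℕ) (k : ℕ) (x : VilGroup m) : ℂ :=
  Complex.exp (2 * Real.pi * Complex.I * ((x k).val : ℂ) / (m k : ℂ))

/-- The Vilenkin functions `ψ_n = ∏_k r_k^{n_k}`. -/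
noncomputable def vilenkin (m : ℕ → ℕ) (n : ℕ) (x : VilGroup m) : ℂ :=
  ∏ j ∈ Finset.range (n + 1), (rademacher m j x) ^ (vDigit m n j)

/-- The Vilenkin-Dirichlet kernels `D_k^ψ = ∑_{j<k} ψ_j`. -/
noncomputable def vilenkinDirichlet (m : ℕ → ℕ) (k : ℕ) (x : VilGroup m) : ℂ :=
  ∑ j ∈ Finset.range k, vilenkin m j x

/-- The Vilenkin-Fejér kernels `K_n^ψ = (1/n) ∑_{k<n} D_k^ψ`. -/
noncomputable def vilenkinFejer (m : ℕ → ℕ) (n : ℕ) (x : VilGroup m) : ℂ :=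
  (1 / n) * ∑ k ∈ Finset.range n, vilenkinDirichlet m k x

/-- The cylinder `I_N = I_N(0) = {y : y_0 = ⋯ = y_{N-1} = 0}`. -/
def cylV (m : ℕ → ℕ) (N : ℕ) : Set (VilGroup m) := {y | ∀ j < N, y j = 0}

/-- The Vilenkin interval `I_N(x)`. -/
def cylVAt (m : ℕ → ℕ) (N : ℕ) (x : VilGroup m) : Set (VilGroup m) :=
  {y | ∀ j < N, y j = x j}

/-- `μ` is the normalized Haar measure on `G_m`, characterized by
`μ(I_N(x)) = 1/M_N` for every cylinder. -/
def IsVilHaar (m : ℕ → ℕ) (μ : Measure (VilGroup m)) : Prop :=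
  ∀ (N : ℕ) (x : VilGroup m), μ (cylVAt m N x) = (Mgen m N : ENNReal)⁻¹

/-- The `k`-th Vilenkin-Fourier coefficient. -/
noncomputable def vCoef (m : ℕ → ℕ) (μ : Measure (VilGroup m))
    (f : VilGroup m → ℂ) (k : ℕ) : ℂ :=
  ∫ x, f x * (starRingEnd ℂ) (vilenkin m k x) ∂μ

/-- The partial sums `S_n^ψ f` of the Vilenkin-Fourier series. -/
noncomputable def vPartialSum (m : ℕ → ℕ) (μ : Measure (VilGroup m))
    (f : VilGroup m → ℂ) (n : ℕ) (x : VilGroup m) : ℂ :=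
  ∑ k ∈ Finset.range n, vCoef m μ f k * vilenkin m k x

/-- The Vilenkin-Fejér means `σ_n^ψ f = (1/n) ∑_{k<n} S_k^ψ f`. -/
noncomputable def vFejerMean (m : ℕ → ℕ) (μ : Measure (VilGroup m))
    (f : VilGroup m → ℂ) (n : ℕ) (x : VilGroup m) : ℂ :=
  (1 / n) * ∑ k ∈ Finset.range n, vPartialSum m μ f k x

/-- The element `e₀ = (1,0,0,…) ∈ G_m`. -/
noncomputable def e0 (m : ℕ → ℕ) : VilGroup m := fun j => if j = 0 then 1 else 0


lemma Mgen_pos (m : ℕ → ℕ) (hm : ∀ k, 2 ≤ m k) (k : ℕ) : 0 < Mgen m k := by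
  induction k with
  | zero => simp [Mgen]
  | succ k ih => exact Nat.mul_pos (lt_of_lt_of_le (by norm_num) (hm k)) ih

lemma m0_dvd_Mgen (m : ℕ → ℕ) (k : ℕ) : m 0 ∣ Mgen m (k + 1) := by
  induction k with
  | zero => simp [Mgen]
  | succ k ih => exact Dvd.dvd.mul_left ih (m (k+1))

lemma rad_abs (m : ℕ → ℕ) (k : ℕ) (x : VilGroup m) :
    ‖rademacher m k x‖ = 1 := by
  have h : (2 * Real.pi * Complex.I * ((x k).val : ℂ) / (m k : ℂ)) =
      ((2 * Real.pi * ((x k).val : ℝ) / (m k : ℝ) : ℝ) : ℂ) * Complex.I := by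
    push_cast; ring
  rw [rademacher, h, Complex.norm_exp_ofReal_mul_I]

lemma vilenkin_abs (m : ℕ → ℕ) (n : ℕ) (x : VilGroup m) :
    ‖vilenkin m n x‖ = 1 := by
  rw [vilenkin, norm_prod]
  apply Finset.prod_eq_one
  intro j _
  rw [norm_pow, rad_abs, one_pow]

lemma fejer_bound (m : ℕ → ℕ) (n : ℕ) (x : VilGroup m) :
    ‖vilenkinFejer m n x‖ ≤ n := by
  rcases Nat.eq_zero_or_pos n with h | h
  · simp [vilenkinFejer, h]
  rw [vilenkinFejer]
  have hD : ∀ k, ‖vilenkinDirichlet m k x‖ ≤ (k : ℝ) := by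
    intro k
    rw [vilenkinDirichlet]
    calc ‖∑ j ∈ Finset.range k, vilenkin m j x‖
        ≤ ∑ j ∈ Finset.range k, ‖vilenkin m j x‖ := by
          exact norm_sum_le _ _
      _ = (k : ℝ) := by simp [vilenkin_abs]
  calc ‖(1 / (n : ℂ)) * ∑ k ∈ Finset.range n, vilenkinDirichlet m k x‖
      = (1 / (n : ℝ)) * ‖∑ k ∈ Finset.range n, vilenkinDirichlet m k x‖ := by
        rw [norm_mul]
        congr 1
        rw [norm_div, norm_one, Complex.norm_natCast]
    _ ≤ (1 / (n : ℝ)) * ∑ k ∈ Finset.range n, (k : ℝ) := by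
        apply mul_le_mul_of_nonneg_left _ (by positivity)
        exact le_trans (norm_sum_le _ _) (Finset.sum_le_sum fun k _ => hD k)
    _ ≤ (1 / (n : ℝ)) * ∑ _k ∈ Finset.range n, (n : ℝ) := by
        apply mul_le_mul_of_nonneg_left _ (by positivity)
        exact Finset.sum_le_sum fun k hk => by
          exact_mod_cast Nat.le_of_lt (Finset.mem_range.mp hk)
    _ = (1 / (n : ℝ)) * (n * n) := by rw [Finset.sum_const, Finset.card_range]; ring
    _ = n := by field_simp

lemma vilenkin_e0 (m : ℕ → ℕ) (hm : ∀ k, 2 ≤ m k) (n : ℕ) :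
    vilenkin m n (e0 m) = Complex.exp (2 * Real.pi * Complex.I / (m 0)) ^ n := by
  set r := Complex.exp (2 * Real.pi * Complex.I / (m 0)) with hr
  have hprim : IsPrimitiveRoot r (m 0) :=
    Complex.isPrimitiveRoot_exp (m 0) (by have := hm 0; omega)
  have hrm : r ^ (m 0) = 1 := hprim.pow_eq_one
  have hrad0 : rademacher m 0 (e0 m) = r := by
    have : Fact (1 < m 0) := ⟨hm 0⟩
    have h1 : e0 m 0 = 1 := by simp [e0]
    rw [rademacher, h1, ZMod.val_one]
    norm_num
    exact hr.symm
  have hradj : ∀ j, j ≠ 0 → rademacher m j (e0 m) = 1 := by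
    intro j hj
    have : e0 m j = 0 := by simp [e0, hj]
    simp [rademacher, this]
  rw [vilenkin, Finset.prod_eq_single_of_mem 0 (Finset.mem_range.mpr (by omega))
    (fun j _ hj => by rw [hradj j hj, one_pow])]
  rw [hrad0]
  have hd : vDigit m n 0 = n % m 0 := by simp [vDigit, Mgen]
  rw [hd, ← pow_eq_pow_mod n hrm]

lemma fejer_e0 (m : ℕ → ℕ) (hm : ∀ k, 2 ≤ m k) (k : ℕ) (hk : 1 ≤ k) :
    vilenkinFejer m (Mgen m k) (e0 m) =
      1 / (1 - Complex.exp (2 * Real.pi * Complex.I / (m 0))) := by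
  set r := Complex.exp (2 * Real.pi * Complex.I / (m 0)) with hr
  have hprim : IsPrimitiveRoot r (m 0) :=
    Complex.isPrimitiveRoot_exp (m 0) (by have := hm 0; omega)
  have hrm : r ^ (m 0) = 1 := hprim.pow_eq_one
  have hr1 : r ≠ 1 := hprim.ne_one (hm 0)
  have hMpos : 0 < Mgen m k := Mgen_pos m hm k
  have hdvd : m 0 ∣ Mgen m k := by
    obtain ⟨k, rfl⟩ : ∃ j, k = j + 1 := ⟨k - 1, by omega⟩
    exact m0_dvd_Mgen m k
  have hrM : r ^ Mgen m k = 1 := by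
    obtain ⟨c, hc⟩ := hdvd
    rw [hc, pow_mul, hrm, one_pow]
  have hD : ∀ j, vilenkinDirichlet m j (e0 m) = (r ^ j - 1) / (r - 1) := by
    intro j
    rw [vilenkinDirichlet]
    have : ∀ i ∈ Finset.range j, vilenkin m i (e0 m) = r ^ i :=
      fun i _ => vilenkin_e0 m hm i
    rw [Finset.sum_congr rfl this, geom_sum_eq hr1]
  have hsum : ∑ j ∈ Finset.range (Mgen m k), vilenkinDirichlet m j (e0 m)
      = -(Mgen m k : ℂ) / (r - 1) := by
    rw [Finset.sum_congr rfl (fun j _ => hD j)]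
    rw [← Finset.sum_div]
    congr 1
    rw [Finset.sum_sub_distrib, geom_sum_eq hr1, hrM, Finset.sum_const, Finset.card_range]
    simp
  rw [vilenkinFejer, hsum]
  have hMne : (Mgen m k : ℂ) ≠ 0 := Nat.cast_ne_zero.mpr hMpos.ne'
  have hrne : r - 1 ≠ 0 := sub_ne_zero.mpr hr1
  have h1r : (1 : ℂ) - r ≠ 0 := sub_ne_zero.mpr (Ne.symm hr1)
  field_simp
  ring

lemma abs_one_sub_exp (m0 : ℕ) (hm0 : 2 ≤ m0) :
    ‖1 - Complex.exp (2 * Real.pi * Complex.I / m0)‖ =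
      2 * Real.sin (Real.pi / m0) := by
  set θ : ℝ := 2 * Real.pi / m0 with hθdef
  have hm0' : (0 : ℝ) < m0 := by exact_mod_cast (by omega : 0 < m0)
  have hθ : (2 * Real.pi * Complex.I / (m0 : ℂ)) = (θ : ℂ) * Complex.I := by
    rw [hθdef]; push_cast; ring
  rw [hθ]
  have hre : (1 - Complex.exp ((θ : ℂ) * Complex.I)).re = 1 - Real.cos θ := by
    simp [Complex.sub_re]
  have him : (1 - Complex.exp ((θ : ℂ) * Complex.I)).im = -Real.sin θ := by
    simp [Complex.sub_im]
  rw [Complex.norm_def, Complex.normSq_apply, hre, him]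
  have key : (1 - Real.cos θ) * (1 - Real.cos θ) + -Real.sin θ * -Real.sin θ
      = 4 * ((1 - Real.cos θ) / 2) := by
    have := Real.sin_sq_add_cos_sq θ; nlinarith
  rw [key]
  have hθ0 : 0 ≤ θ := by positivity
  have hθ2 : θ ≤ 2 * Real.pi := by
    rw [hθdef]
    have : (1 : ℝ) ≤ m0 := by exact_mod_cast (by omega : 1 ≤ m0)
    calc 2 * Real.pi / m0 ≤ 2 * Real.pi / 1 := by
          apply div_le_div_of_nonneg_left (by positivity) (by norm_num) this
      _ = 2 * Real.pi := by ring
  have hhalf : Real.pi / m0 = θ / 2 := by rw [hθdef]; ring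
  rw [hhalf, Real.sin_half_eq_sqrt hθ0 hθ2]
  rw [show (4 : ℝ) * ((1 - Real.cos θ) / 2) = 2 ^ 2 * ((1 - Real.cos θ) / 2) by norm_num,
    Real.sqrt_mul (by positivity), Real.sqrt_sq (by norm_num)]

/-- At `e₀ = (1,0,0,…)` one has `|K_{M_k}^ψ(e₀)| = 1/(2 sin(π/m₀)) ≥ 1/2` for every
`k ∈ ℕ₊`; hence condition (A4), `lim_n sup_{G_m \ I_N} |Φ_n| = 0`, fails for the
family of Vilenkin-Fejér kernels `{K_{M_k}^ψ}`. -/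
theorem vilenkinFejer_A4_fails
    (m : ℕ → ℕ) (hm : ∀ k, 2 ≤ m k) (hbd : ∃ B, ∀ k, m k ≤ B) :
    (∀ k : ℕ, 1 ≤ k →
      ‖vilenkinFejer m (Mgen m k) (e0 m)‖ = 1 / (2 * Real.sin (Real.pi / m 0)) ∧
        (1 : ℝ) / 2 ≤ ‖vilenkinFejer m (Mgen m k) (e0 m)‖) ∧
      ∀ N : ℕ, 1 ≤ N →
        ¬ Tendsto
            (fun k : ℕ => ⨆ x : ((cylV m N)ᶜ : Set (VilGroup m)),
              ‖vilenkinFejer m (Mgen m k) x‖)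
            atTop (nhds 0) := by
  have hm0 := hm 0
  have hsinpos : 0 < Real.sin (Real.pi / m 0) := by
    apply Real.sin_pos_of_pos_of_lt_pi
    · have : (0 : ℝ) < m 0 := by exact_mod_cast (by omega : 0 < m 0)
      positivity
    · apply div_lt_self Real.pi_pos
      exact_mod_cast (by omega : 1 < m 0)
  have key : ∀ k, 1 ≤ k → ‖vilenkinFejer m (Mgen m k) (e0 m)‖
      = 1 / (2 * Real.sin (Real.pi / m 0)) := by
    intro k hk
    rw [fejer_e0 m hm k hk, norm_div, norm_one, abs_one_sub_exp (m 0) hm0]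
  have half : (1 : ℝ) / 2 ≤ 1 / (2 * Real.sin (Real.pi / m 0)) := by
    apply one_div_le_one_div_of_le (by positivity)
    nlinarith [Real.sin_le_one (Real.pi / m 0)]
  constructor
  · intro k hk
    exact ⟨key k hk, (key k hk).symm ▸ half⟩
  · intro N hN hT
    have he0 : e0 m ∈ (cylV m N)ᶜ := by
      intro h
      have h0 := h 0 (by omega)
      have h1 : (1 : ZMod (m 0)) = 0 := by simpa [e0] using h0
      have : Fact (1 < m 0) := ⟨hm0⟩
      have hv := ZMod.val_one (m 0)
      rw [h1] at hv
      simp at hv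
    have hbdd : ∀ k : ℕ, BddAbove (Set.range fun x : ((cylV m N)ᶜ : Set (VilGroup m)) =>
        ‖vilenkinFejer m (Mgen m k) x‖) := by
      intro k
      refine ⟨Mgen m k, ?_⟩
      rintro y ⟨x, rfl⟩
      exact fejer_bound m _ x
    have hge : ∀ k, 1 ≤ k → (1 : ℝ) / 2 ≤
        ⨆ x : ((cylV m N)ᶜ : Set (VilGroup m)),
          ‖vilenkinFejer m (Mgen m k) x‖ := by
      intro k hk
      refine le_trans ?_ (le_ciSup (hbdd k) (⟨e0 m, he0⟩ :
        ((cylV m N)ᶜ : Set (VilGroup m))))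
      exact (key k hk).symm ▸ half
    have hev : ∀ᶠ k in atTop, (⨆ x : ((cylV m N)ᶜ : Set (VilGroup m)),
        ‖vilenkinFejer m (Mgen m k) x‖) < 1 / 2 := by
      have : Set.Iio ((1:ℝ)/2) ∈ nhds (0 : ℝ) := Iio_mem_nhds (by norm_num)
      exact hT.eventually_mem this
    obtain ⟨k, hk1, hk2⟩ := (hev.and (eventually_ge_atTop 1)).exists
    exact absurd (hge k hk2) (not_le.mpr hk1)
end

section
/- For any n > M_N on a bounded Vilenkin group and any x in the set I_N^{k,l} (with 0 ≤ k < l ≤ N−1), the uniform bound sup_{n > M_N} |K_n^ψ(x)| ≤ c M_l M_k / M_N holds, and for x ∈ I_N^{k,N}, sup_{n > M_N} |K_n^ψ(x)| ≤ c M_k, where c is an absolute constant. -/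
open MeasureTheory Filter Complex

/-- The set `I_N^{k,l}` for `k < l < N`:
`x_0 = ⋯ = x_{k-1} = 0`, `x_k ≠ 0`, `x_{k+1} = ⋯ = x_{l-1} = 0`, `x_l ≠ 0`. -/
def cylKL (m : ℕ → ℕ) (N k l : ℕ) : Set (VilGroup m) :=
  {x | (∀ j < k, x j = 0) ∧ x k ≠ 0 ∧ (∀ j, k < j → j < l → x j = 0) ∧ x l ≠ 0}

/-- The set `I_N^{k,N}`:
`x_0 = ⋯ = x_{k-1} = 0`, `x_k ≠ 0`, `x_{k+1} = ⋯ = x_{N-1} = 0`. -/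
def cylKN (m : ℕ → ℕ) (N k : ℕ) : Set (VilGroup m) :=
  {x | (∀ j < k, x j = 0) ∧ x k ≠ 0 ∧ ∀ j, k < j → j < N → x j = 0}

section Aux
variable (m : ℕ → ℕ)

lemma Mpos (hm : ∀ k, 2 ≤ m k) (i : ℕ) : 0 < Mgen m i := by
  induction i with
  | zero => simp [Mgen]
  | succ n ih => have := hm n; exact Nat.mul_pos (by omega) ih

lemma two_pow_le_M (hm : ∀ k, 2 ≤ m k) (i : ℕ) : 2 ^ i ≤ Mgen m i := by
  induction i with
  | zero => simp [Mgen]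
  | succ n ih =>
    calc 2 ^ (n+1) = 2 * 2 ^ n := by ring
    _ ≤ m n * Mgen m n := Nat.mul_le_mul (hm n) ih
    _ = Mgen m (n+1) := rfl

lemma M_dvd_M {j i : ℕ} (h : j ≤ i) : Mgen m j ∣ Mgen m i := by
  induction i with
  | zero => simpa [Nat.le_zero.mp h] using dvd_refl _
  | succ n ih =>
    rcases Nat.lt_succ_iff_lt_or_eq.mp (Nat.lt_succ_of_le h) with h' | h'
    · exact (ih (by omega)).trans (Dvd.intro_left (m n) rfl)
    · subst h'; rfl

lemma Msucc_dvd {j i : ℕ} (h : j < i) : Mgen m (j+1) ∣ Mgen m i :=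
  M_dvd_M m h

lemma M_lt_M (hm : ∀ k, 2 ≤ m k) {j i : ℕ} (h : j < i) : Mgen m j < Mgen m i := by
  have h2 := Msucc_dvd m h
  have h3 : Mgen m j < Mgen m (j+1) := by
    have h4 := hm j
    have h5 := Mpos m hm j
    calc Mgen m j < 2 * Mgen m j := by omega
    _ ≤ m j * Mgen m j := Nat.mul_le_mul_right _ (hm j)
    _ = Mgen m (j+1) := rfl
  exact h3.trans_le (Nat.le_of_dvd (Mpos m hm i) h2)

lemma digit_eq_zero {n i : ℕ} (h : n < Mgen m i) : vDigit m n i = 0 := by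
  unfold vDigit
  rw [Nat.div_eq_of_lt h]
  simp

lemma digit_eq_zero_of_big (hm : ∀ k, 2 ≤ m k) {n i : ℕ} (h : n < i) : vDigit m n i = 0 := by
  refine digit_eq_zero m (lt_of_lt_of_le ?_ (two_pow_le_M m hm i))
  calc n < i := h
  _ < 2 ^ i := Nat.lt_two_pow_self

lemma digit_add (hm : ∀ k, 2 ≤ m k) {j a b : ℕ} (hj : Mgen m j ∣ a) (hb : b < Mgen m j)
    (i : ℕ) : vDigit m (a + b) i = vDigit m a i + vDigit m b i := by
  rcases lt_or_ge i j with hij | hij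
  · -- i < j : digit of a is 0, low digits come from b
    have h1 : Mgen m (i+1) ∣ a := (Msucc_dvd m hij).trans hj
    obtain ⟨c, hc⟩ := h1
    have hMi := Mpos m hm i
    have hrw : a = Mgen m i * (m i * c) := by
      rw [hc]; simp [Mgen]; ring
    unfold vDigit
    rw [hrw, Nat.mul_add_div hMi, Nat.mul_div_cancel_left _ hMi]
    simp [Nat.mul_add_mod, Nat.mul_mod_right]
  · -- j ≤ i : digit of b is 0
    have hMb : b < Mgen m i := lt_of_lt_of_le hb (Nat.le_of_dvd (Mpos m hm i) (M_dvd_M m hij))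
    have hdb : vDigit m b i = 0 := digit_eq_zero m hMb
    have hMji : Mgen m j ∣ Mgen m i := M_dvd_M m hij
    have hMi := Mpos m hm i
    -- a % M_i is a multiple of M_j, hence a % M_i + b < M_i
    have hrem : Mgen m j ∣ a % Mgen m i := (Nat.dvd_mod_iff hMji).mpr hj
    obtain ⟨u, hu⟩ := hrem
    obtain ⟨K, hK⟩ := hMji
    have hMj := Mpos m hm j
    have hlt : a % Mgen m i < Mgen m i := Nat.mod_lt _ hMi
    have huK : u < K := by
      by_contra hcon
      push_neg at hcon
      have : Mgen m i ≤ a % Mgen m i := by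
        rw [hu, hK]; exact Nat.mul_le_mul_left _ hcon
      omega
    have hsum : a % Mgen m i + b < Mgen m i := by
      have : Mgen m j * u + Mgen m j ≤ Mgen m i := by
        rw [hK, ← Nat.mul_succ]; exact Nat.mul_le_mul_left _ huK
      omega
    have hdiv : (a + b) / Mgen m i = a / Mgen m i := by
      conv_lhs => rw [← Nat.div_add_mod a (Mgen m i)]
      rw [Nat.add_assoc, Nat.mul_add_div hMi, Nat.div_eq_of_lt hsum]
      omega
    unfold vDigit
    rw [hdiv, Nat.div_eq_of_lt hMb]
    simp

end Aux

section Psi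
variable (m : ℕ → ℕ)

lemma vilenkin_pad (hm : ∀ k, 2 ≤ m k) (n T : ℕ) (hT : n + 1 ≤ T) (x : VilGroup m) :
    vilenkin m n x = ∏ j ∈ Finset.range T, (rademacher m j x) ^ (vDigit m n j) := by
  unfold vilenkin
  refine Finset.prod_subset (Finset.range_subset_range.mpr hT) ?_
  intro i _ hi
  simp only [Finset.mem_range, not_lt] at hi
  rw [digit_eq_zero_of_big m hm (by omega), pow_zero]

lemma vilenkin_add (hm : ∀ k, 2 ≤ m k) {j a b : ℕ} (hj : Mgen m j ∣ a) (hb : b < Mgen m j)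
    (x : VilGroup m) :
    vilenkin m (a + b) x = vilenkin m a x * vilenkin m b x := by
  rw [vilenkin_pad m hm a (a+b+1) (by omega) x, vilenkin_pad m hm b (a+b+1) (by omega) x,
    vilenkin, ← Finset.prod_mul_distrib]
  refine Finset.prod_congr rfl fun i _ => ?_
  rw [digit_add m hm hj hb i, pow_add]

lemma digit_tmul (hm : ∀ k, 2 ≤ m k) {t j : ℕ} (ht : t < m j) (i : ℕ) :
    vDigit m (t * Mgen m j) i = if i = j then t else 0 := by
  rcases lt_trichotomy i j with hij | hij | hij
  · have h1 : Mgen m (i+1) ∣ Mgen m j := Msucc_dvd m hij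
    obtain ⟨c, hc⟩ := h1
    have hMi := Mpos m hm i
    have hrw : t * Mgen m j = Mgen m i * (m i * (c * t)) := by
      rw [hc]; simp [Mgen]; ring
    unfold vDigit
    rw [hrw, Nat.mul_div_cancel_left _ hMi, if_neg (by omega)]
    simp [Nat.mul_mod_right, Nat.mul_assoc]
  · subst hij
    unfold vDigit
    rw [Nat.mul_div_cancel _ (Mpos m hm i), if_pos rfl, Nat.mod_eq_of_lt ht]
  · rw [if_neg (by omega)]
    refine digit_eq_zero m (lt_of_lt_of_le ?_ (Nat.le_of_dvd (Mpos m hm i) (Msucc_dvd m hij)))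
    calc t * Mgen m j < m j * Mgen m j := by
          exact (Nat.mul_lt_mul_right (Mpos m hm j)).mpr ht
    _ = Mgen m (j+1) := rfl

lemma vilenkin_tmul (hm : ∀ k, 2 ≤ m k) {t j : ℕ} (ht : t < m j) (x : VilGroup m) :
    vilenkin m (t * Mgen m j) x = rademacher m j x ^ t := by
  rw [vilenkin_pad m hm _ (t * Mgen m j + j + 1) (by omega) x]
  rw [Finset.prod_eq_single j
    (fun i _ hij => by rw [digit_tmul m hm ht i, if_neg hij, pow_zero])
    (fun h => absurd (Finset.mem_range.mpr (by omega)) h)]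
  rw [digit_tmul m hm ht j, if_pos rfl]

lemma vilenkin_zero' (hm : ∀ k, 2 ≤ m k) (x : VilGroup m) : vilenkin m 0 x = 1 := by
  unfold vilenkin
  rw [Finset.prod_range_one]
  rw [digit_eq_zero m (by simpa using Mpos m hm 0), pow_zero]

end Psi

section Rad
variable (m : ℕ → ℕ)

lemma rademacher_eq_exp (k : ℕ) (x : VilGroup m) (hmk : (m k : ℝ) ≠ 0) :
    rademacher m k x = Complex.exp (((2 * Real.pi * ((x k).val : ℝ) / (m k : ℝ) : ℝ) : ℂ) * Complex.I) := by
  unfold rademacher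
  congr 1
  push_cast
  field_simp

lemma abs_rademacher (hm : ∀ k, 2 ≤ m k) (k : ℕ) (x : VilGroup m) :
    ‖rademacher m k x‖ = 1 := by
  have hmk : (m k : ℝ) ≠ 0 := by have := hm k; positivity
  rw [rademacher_eq_exp m k x hmk]
  exact Complex.norm_exp_ofReal_mul_I _

lemma abs_vilenkin (hm : ∀ k, 2 ≤ m k) (n : ℕ) (x : VilGroup m) :
    ‖vilenkin m n x‖ = 1 := by
  unfold vilenkin
  rw [norm_prod]
  refine Finset.prod_eq_one fun i _ => ?_
  rw [norm_pow, abs_rademacher m hm i x, one_pow]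

lemma rademacher_pow (hm : ∀ k, 2 ≤ m k) (k : ℕ) (x : VilGroup m) :
    rademacher m k x ^ (m k) = 1 := by
  have hmk : (m k : ℂ) ≠ 0 := Nat.cast_ne_zero.mpr (by have := hm k; omega)
  unfold rademacher
  rw [← Complex.exp_nat_mul]
  have h1 : (m k : ℂ) * (2 * Real.pi * Complex.I * ((x k).val : ℂ) / (m k : ℂ))
      = ((x k).val : ℂ) * (2 * Real.pi * Complex.I) := by field_simp
  rw [h1]
  exact Complex.exp_nat_mul_two_pi_mul_I _

lemma rademacher_one (k : ℕ) (x : VilGroup m) (h : x k = 0) :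
    rademacher m k x = 1 := by
  unfold rademacher
  rw [h]
  simp

lemma rademacher_ne_one (hm : ∀ k, 2 ≤ m k) (k : ℕ) (x : VilGroup m) (h : x k ≠ 0) :
    rademacher m k x ≠ 1 := by
  haveI : NeZero (m k) := ⟨by have := hm k; omega⟩
  have hv0 : (x k).val ≠ 0 := fun hc => h (by rwa [← ZMod.val_eq_zero])
  have hvlt : (x k).val < m k := ZMod.val_lt (x k)
  intro hc
  unfold rademacher at hc
  rw [Complex.exp_eq_one_iff] at hc
  obtain ⟨n, hn⟩ := hc
  have hpi : (2 * Real.pi * Complex.I : ℂ) ≠ 0 := by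
    simp [Real.pi_ne_zero, Complex.I_ne_zero]
  have hmk : (m k : ℂ) ≠ 0 := Nat.cast_ne_zero.mpr (by have := hm k; omega)
  rw [div_eq_iff hmk] at hn
  have h2 : ((x k).val : ℂ) = (n : ℂ) * (m k : ℂ) := by
    refine mul_left_cancel₀ hpi ?_
    rw [show (2 * Real.pi * Complex.I : ℂ) * ((n : ℂ) * (m k : ℂ))
        = (n : ℂ) * (2 * Real.pi * Complex.I) * (m k : ℂ) from by ring]
    exact hn
  have h3 : ((x k).val : ℤ) = n * (m k : ℤ) := by exact_mod_cast h2
  have hv1 : 1 ≤ ((x k).val : ℤ) := by exact_mod_cast Nat.one_le_iff_ne_zero.mpr hv0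
  have hv2 : ((x k).val : ℤ) < (m k : ℤ) := by exact_mod_cast hvlt
  rcases le_or_gt n 0 with hn0 | hn0
  · nlinarith [hv1, h3, hn0, hv2]
  · have h4 : (1:ℤ) ≤ n := hn0
    nlinarith [hv2, h3, h4]

lemma geom_rademacher (hm : ∀ k, 2 ≤ m k) (k : ℕ) (x : VilGroup m) :
    (∑ u ∈ Finset.range (m k), rademacher m k x ^ u)
      = if x k = 0 then (m k : ℂ) else 0 := by
  by_cases h : x k = 0
  · rw [if_pos h, rademacher_one m k x h]
    simp
  · rw [if_neg h, geom_sum_eq (rademacher_ne_one m hm k x h), rademacher_pow m hm k x]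
    simp

end Rad

section Dir
variable (m : ℕ → ℕ)

noncomputable def Fk (n : ℕ) (x : VilGroup m) : ℂ :=
  ∑ k ∈ Finset.range n, vilenkinDirichlet m k x

lemma D_add (hm : ∀ k, 2 ≤ m k) {j a q : ℕ} (hj : Mgen m j ∣ a) (hq : q ≤ Mgen m j)
    (x : VilGroup m) :
    vilenkinDirichlet m (a + q) x
      = vilenkinDirichlet m a x + vilenkin m a x * vilenkinDirichlet m q x := by
  unfold vilenkinDirichlet
  rw [Finset.sum_range_add, Finset.mul_sum]
  congr 1
  refine Finset.sum_congr rfl fun i hi => ?_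
  rw [vilenkin_add m hm hj (lt_of_lt_of_le (Finset.mem_range.mp hi) hq) x]

lemma D_tmul (hm : ∀ k, 2 ≤ m k) {t j : ℕ} (ht : t ≤ m j) (x : VilGroup m) :
    vilenkinDirichlet m (t * Mgen m j) x
      = (∑ v ∈ Finset.range t, rademacher m j x ^ v) * vilenkinDirichlet m (Mgen m j) x := by
  induction t with
  | zero => simp [vilenkinDirichlet]
  | succ t ih =>
    have ht' : t < m j := by omega
    rw [Nat.succ_mul, D_add m hm ⟨t, by ring⟩ le_rfl x, ih (by omega),
      vilenkin_tmul m hm ht' x, Finset.sum_range_succ]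
    ring

lemma D_M (hm : ∀ k, 2 ≤ m k) (n : ℕ) (x : VilGroup m) :
    vilenkinDirichlet m (Mgen m n) x
      = if (∀ j < n, x j = 0) then (Mgen m n : ℂ) else 0 := by
  induction n with
  | zero =>
    rw [if_pos (by omega)]
    show vilenkinDirichlet m 1 x = _
    unfold vilenkinDirichlet
    rw [Finset.sum_range_one, vilenkin_zero' m hm x]
    simp [Mgen]
  | succ n ih =>
    have hM : Mgen m (n+1) = m n * Mgen m n := rfl
    rw [hM, D_tmul m hm le_rfl x, geom_rademacher m hm n x, ih]
    by_cases h1 : x n = 0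
    · by_cases h2 : ∀ j < n, x j = 0
      · have h3 : ∀ j < n + 1, x j = 0 := by
          intro j hj
          rcases Nat.lt_succ_iff_lt_or_eq.mp hj with h | h
          · exact h2 j h
          · subst h; exact h1
        rw [if_pos h1, if_pos h2, if_pos h3]
        push_cast
        ring
      · have h3 : ¬ ∀ j < n + 1, x j = 0 := fun hc => h2 fun j hj => hc j (by omega)
        rw [if_pos h1, if_neg h2, if_neg h3]
        ring
    · have h3 : ¬ ∀ j < n + 1, x j = 0 := fun hc => h1 (hc n (by omega))
      rw [if_neg h1, if_neg h3]
      ring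

lemma abs_D_le (hm : ∀ k, 2 ≤ m k) (k : ℕ) (x : VilGroup m) :
    ‖vilenkinDirichlet m k x‖ ≤ k := by
  unfold vilenkinDirichlet
  calc ‖∑ j ∈ Finset.range k, vilenkin m j x‖
      ≤ ∑ j ∈ Finset.range k, ‖vilenkin m j x‖ := by
        exact norm_sum_le _ _
  _ = ∑ j ∈ Finset.range k, 1 := by
        exact Finset.sum_congr rfl fun j _ => abs_vilenkin m hm j x
  _ = k := by simp

lemma abs_Fk_le (hm : ∀ k, 2 ≤ m k) (n : ℕ) (x : VilGroup m) :
    ‖Fk m n x‖ ≤ (n : ℝ) ^ 2 := by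
  unfold Fk
  calc ‖∑ k ∈ Finset.range n, vilenkinDirichlet m k x‖
      ≤ ∑ k ∈ Finset.range n, ‖vilenkinDirichlet m k x‖ :=
        norm_sum_le _ _
  _ ≤ ∑ k ∈ Finset.range n, (n : ℝ) := by
      refine Finset.sum_le_sum fun k hk => ?_
      exact (abs_D_le m hm k x).trans (by exact_mod_cast Nat.le_of_lt (Finset.mem_range.mp hk))
  _ = (n : ℝ) * n := by simp [mul_comm]
  _ = (n : ℝ) ^ 2 := by ring

end Dir

section Kernels
variable (m : ℕ → ℕ)

lemma F_block (hm : ∀ k, 2 ≤ m k) {t j : ℕ} (ht : t ≤ m j) (x : VilGroup m) :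
    Fk m (t * Mgen m j) x
      = (Mgen m j : ℂ) * (∑ u ∈ Finset.range t, vilenkinDirichlet m (u * Mgen m j) x)
        + (∑ u ∈ Finset.range t, rademacher m j x ^ u) * Fk m (Mgen m j) x := by
  induction t with
  | zero => simp [Fk]
  | succ t ih =>
    have ht' : t < m j := by omega
    have hsum : ∀ i < Mgen m j, vilenkinDirichlet m (t * Mgen m j + i) x
        = vilenkinDirichlet m (t * Mgen m j) x
          + rademacher m j x ^ t * vilenkinDirichlet m i x := by
      intro i hi
      rw [D_add m hm ⟨t, by ring⟩ (le_of_lt hi) x, vilenkin_tmul m hm ht' x]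
    have key : Fk m ((t+1) * Mgen m j) x = Fk m (t * Mgen m j) x
        + ((Mgen m j : ℂ) * vilenkinDirichlet m (t * Mgen m j) x
          + rademacher m j x ^ t * Fk m (Mgen m j) x) := by
      show (∑ k ∈ Finset.range ((t+1) * Mgen m j), vilenkinDirichlet m k x) = _
      rw [show (t+1) * Mgen m j = t * Mgen m j + Mgen m j from by ring,
        Finset.sum_range_add]
      congr 1
      rw [Finset.sum_congr rfl fun i hi => hsum i (Finset.mem_range.mp hi),
        Finset.sum_add_distrib, ← Finset.mul_sum]
      congr 1
      rw [Finset.sum_const, Finset.card_range, nsmul_eq_mul]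
    rw [key, ih (by omega), Finset.sum_range_succ, Finset.sum_range_succ]
    ring

lemma F_rec (hm : ∀ k, 2 ≤ m k) (n : ℕ) (x : VilGroup m) :
    Fk m (Mgen m (n+1)) x
      = (Mgen m n : ℂ) * (∑ u ∈ Finset.range (m n), ∑ v ∈ Finset.range u, rademacher m n x ^ v)
          * vilenkinDirichlet m (Mgen m n) x
        + (∑ u ∈ Finset.range (m n), rademacher m n x ^ u) * Fk m (Mgen m n) x := by
  have hM : Mgen m (n+1) = m n * Mgen m n := rfl
  rw [hM, F_block m hm le_rfl x]
  congr 1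
  rw [Finset.sum_congr rfl fun u hu =>
    D_tmul m hm (le_of_lt (Finset.mem_range.mp hu)) x]
  rw [← Finset.sum_mul]
  ring

lemma Fk_M_two_nonzero (hm : ∀ k, 2 ≤ m k) {t j n : ℕ} (x : VilGroup m)
    (htj : t < j) (hjn : j < n) (hxt : x t ≠ 0) (hxj : x j ≠ 0) :
    Fk m (Mgen m n) x = 0 := by
  induction n with
  | zero => omega
  | succ n ih =>
    have hD : vilenkinDirichlet m (Mgen m n) x = 0 := by
      rw [D_M m hm n x, if_neg]
      intro hc
      exact hxt (hc t (by omega))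
    rw [F_rec m hm n x, hD, mul_zero, zero_add]
    rcases Nat.lt_succ_iff_lt_or_eq.mp hjn with h | h
    · rw [ih h, mul_zero]
    · subst h
      rw [geom_rademacher m hm j x, if_neg hxj, zero_mul]

lemma Fk_M_single {B : ℕ} (hm : ∀ k, 2 ≤ m k) (hB : ∀ k, m k ≤ B) {t n : ℕ}
    (x : VilGroup m) (htn : t < n) (hxt : x t ≠ 0) (hx : ∀ i < n, i ≠ t → x i = 0) :
    ‖Fk m (Mgen m n) x‖ ≤ (B : ℝ) * Mgen m n * Mgen m t := by
  induction n, htn using Nat.le_induction with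
  | base =>
    have hγ : (∑ u ∈ Finset.range (m t), rademacher m t x ^ u) = 0 := by
      rw [geom_rademacher m hm t x, if_neg hxt]
    have hD : vilenkinDirichlet m (Mgen m t) x = (Mgen m t : ℂ) := by
      rw [D_M m hm t x, if_pos (fun j hj => hx j (by omega) (by omega))]
    rw [F_rec m hm t x, hγ, zero_mul, add_zero, hD]
    rw [norm_mul, norm_mul, Complex.norm_natCast]
    have hσ : ‖∑ u ∈ Finset.range (m t), ∑ v ∈ Finset.range u,
        rademacher m t x ^ v‖ ≤ (m t : ℝ) * m t := by
      calc ‖∑ u ∈ Finset.range (m t), ∑ v ∈ Finset.range u, rademacher m t x ^ v‖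
          ≤ ∑ u ∈ Finset.range (m t), ‖∑ v ∈ Finset.range u, rademacher m t x ^ v‖ :=
            norm_sum_le _ _
      _ ≤ ∑ u ∈ Finset.range (m t), (m t : ℝ) := by
          refine Finset.sum_le_sum fun u hu => ?_
          calc ‖∑ v ∈ Finset.range u, rademacher m t x ^ v‖
              ≤ ∑ v ∈ Finset.range u, ‖rademacher m t x ^ v‖ :=
                norm_sum_le _ _
          _ = ∑ v ∈ Finset.range u, (1:ℝ) := by
              refine Finset.sum_congr rfl fun v _ => ?_
              rw [norm_pow, abs_rademacher m hm t x, one_pow]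
          _ = u := by simp
          _ ≤ (m t : ℝ) := by exact_mod_cast le_of_lt (Finset.mem_range.mp hu)
      _ = (m t : ℝ) * m t := by simp [mul_comm]
    have hMt1 : (Mgen m (t+1) : ℝ) = (m t : ℝ) * Mgen m t := by
      show ((m t * Mgen m t : ℕ) : ℝ) = _
      push_cast; ring
    have hBt : (m t : ℝ) ≤ B := by exact_mod_cast hB t
    have h0 : (0:ℝ) ≤ Mgen m t := by positivity
    have h1 : (0:ℝ) ≤ m t := by positivity
    rw [hMt1]
    have e1 : (Mgen m t : ℝ) * ‖∑ u ∈ Finset.range (m t), ∑ v ∈ Finset.range u,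
        rademacher m t x ^ v‖ * Mgen m t ≤ (Mgen m t : ℝ) * ((m t : ℝ) * m t) * Mgen m t :=
      mul_le_mul_of_nonneg_right (mul_le_mul_of_nonneg_left hσ h0) h0
    refine e1.trans ?_
    nlinarith [mul_le_mul_of_nonneg_right hBt (mul_nonneg (mul_nonneg h1 h0) h0)]
  | succ n hn ih =>
    have hxn : x n = 0 := hx n (by omega) (by omega)
    have hγ : (∑ u ∈ Finset.range (m n), rademacher m n x ^ u) = (m n : ℂ) := by
      rw [geom_rademacher m hm n x, if_pos hxn]
    have hD : vilenkinDirichlet m (Mgen m n) x = 0 := by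
      rw [D_M m hm n x, if_neg (fun hc => hxt (hc t (by omega)))]
    rw [F_rec m hm n x, hD, mul_zero, zero_add, hγ, norm_mul, Complex.norm_natCast]
    have hih := ih (fun i hi hit => hx i (by omega) hit)
    have hMn1 : (Mgen m (n+1) : ℝ) = (m n : ℝ) * Mgen m n := by
      show ((m n * Mgen m n : ℕ) : ℝ) = _
      push_cast; ring
    have hBn : (m n : ℝ) ≤ B := by exact_mod_cast hB n
    have h1 : (0:ℝ) ≤ m n := by positivity
    have h2 : (0:ℝ) ≤ Mgen m t := by positivity
    have h3 : (0:ℝ) ≤ Mgen m n := by positivity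
    rw [hMn1]
    have e1 := mul_le_mul_of_nonneg_left hih h1
    refine le_trans e1 (le_of_eq (by ring))

end Kernels

section Master
variable (m : ℕ → ℕ)

lemma abs_geom_le (hm : ∀ k, 2 ≤ m k) (s u : ℕ) (x : VilGroup m) :
    ‖∑ v ∈ Finset.range u, rademacher m s x ^ v‖ ≤ (u : ℝ) := by
  calc ‖∑ v ∈ Finset.range u, rademacher m s x ^ v‖
      ≤ ∑ v ∈ Finset.range u, ‖rademacher m s x ^ v‖ :=
        norm_sum_le _ _
  _ = ∑ v ∈ Finset.range u, (1:ℝ) := by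
      refine Finset.sum_congr rfl fun v _ => ?_
      rw [norm_pow, abs_rademacher m hm s x, one_pow]
  _ = u := by simp

lemma F_step {B : ℕ} (hm : ∀ k, 2 ≤ m k) (hB : ∀ k, m k ≤ B) {s n : ℕ} (x : VilGroup m)
    (hs1 : Mgen m s ≤ n) (hs2 : n < Mgen m (s+1)) :
    ‖Fk m n x‖
      ≤ 2 * (B:ℝ)^2 * Mgen m s * ‖vilenkinDirichlet m (Mgen m s) x‖
        + (B:ℝ) * ‖Fk m (Mgen m s) x‖
        + ‖Fk m (n % Mgen m s) x‖ := by
  have hMs : 0 < Mgen m s := Mpos m hm s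
  set t := n / Mgen m s with htdef
  set q := n % Mgen m s with hqdef
  have htm : t < m s := by
    rw [htdef, Nat.div_lt_iff_lt_mul hMs]
    calc n < Mgen m (s+1) := hs2
    _ = m s * Mgen m s := rfl
    _ ≤ m s * Mgen m s := le_rfl
  have hq : q < Mgen m s := Nat.mod_lt _ hMs
  have hnd : t * Mgen m s + q = n := by
    rw [htdef, hqdef, mul_comm]
    exact Nat.div_add_mod n _
  have hid : Fk m n x = Fk m (t * Mgen m s) x
      + (q:ℂ) * vilenkinDirichlet m (t * Mgen m s) x
      + rademacher m s x ^ t * Fk m q x := by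
    conv_lhs => rw [← hnd]
    show (∑ k ∈ Finset.range (t * Mgen m s + q), vilenkinDirichlet m k x) = _
    rw [Finset.sum_range_add]
    have hc : ∀ i ∈ Finset.range q, vilenkinDirichlet m (t * Mgen m s + i) x
        = vilenkinDirichlet m (t * Mgen m s) x
          + rademacher m s x ^ t * vilenkinDirichlet m i x := by
      intro i hi
      rw [D_add m hm ⟨t, by ring⟩ (le_of_lt (lt_trans (Finset.mem_range.mp hi) hq)) x,
        vilenkin_tmul m hm htm x]
    rw [Finset.sum_congr rfl hc, Finset.sum_add_distrib, Finset.sum_const,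
      Finset.card_range, nsmul_eq_mul, ← Finset.mul_sum]
    show _ = (∑ k ∈ Finset.range (t * Mgen m s), vilenkinDirichlet m k x) + _ + _
    unfold Fk
    ring
  have hDt : ∀ u : ℕ, u ≤ m s → ‖vilenkinDirichlet m (u * Mgen m s) x‖
      ≤ (u:ℝ) * ‖vilenkinDirichlet m (Mgen m s) x‖ := by
    intro u hu
    rw [D_tmul m hm hu x, norm_mul]
    exact mul_le_mul_of_nonneg_right (abs_geom_le m hm s u x) (norm_nonneg _)
  have hFt : ‖Fk m (t * Mgen m s) x‖
      ≤ (Mgen m s : ℝ) * ((t:ℝ) * t * ‖vilenkinDirichlet m (Mgen m s) x‖)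
        + (t:ℝ) * ‖Fk m (Mgen m s) x‖ := by
    rw [F_block m hm (le_of_lt htm) x]
    refine (norm_add_le _ _).trans ?_
    have hA : ‖(Mgen m s : ℂ) *
        (∑ u ∈ Finset.range t, vilenkinDirichlet m (u * Mgen m s) x)‖
        ≤ (Mgen m s : ℝ) * ((t:ℝ) * t * ‖vilenkinDirichlet m (Mgen m s) x‖) := by
      rw [norm_mul, Complex.norm_natCast]
      refine mul_le_mul_of_nonneg_left ?_ (by positivity)
      calc ‖∑ u ∈ Finset.range t, vilenkinDirichlet m (u * Mgen m s) x‖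
          ≤ ∑ u ∈ Finset.range t, ‖vilenkinDirichlet m (u * Mgen m s) x‖ :=
            norm_sum_le _ _
      _ ≤ ∑ u ∈ Finset.range t, (t:ℝ) * ‖vilenkinDirichlet m (Mgen m s) x‖ := by
          refine Finset.sum_le_sum fun u hu => ?_
          refine (hDt u (le_of_lt (lt_of_lt_of_le (Finset.mem_range.mp hu) htm.le))).trans ?_
          refine mul_le_mul_of_nonneg_right ?_ (norm_nonneg _)
          exact_mod_cast (Finset.mem_range.mp hu).le
      _ = (t:ℝ) * t * ‖vilenkinDirichlet m (Mgen m s) x‖ := by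
          rw [Finset.sum_const, Finset.card_range, nsmul_eq_mul]; ring
    have hBb : ‖(∑ u ∈ Finset.range t, rademacher m s x ^ u) * Fk m (Mgen m s) x‖
        ≤ (t:ℝ) * ‖Fk m (Mgen m s) x‖ := by
      rw [norm_mul]
      exact mul_le_mul_of_nonneg_right (abs_geom_le m hm s t x) (norm_nonneg _)
    linarith
  have habs : ‖Fk m n x‖ ≤ ‖Fk m (t * Mgen m s) x‖
      + (q:ℝ) * ‖vilenkinDirichlet m (t * Mgen m s) x‖
      + ‖Fk m q x‖ := by
    rw [hid]
    refine (norm_add_le _ _).trans ?_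
    have h1 : ‖Fk m (t * Mgen m s) x + (q:ℂ) * vilenkinDirichlet m (t * Mgen m s) x‖
        ≤ ‖Fk m (t * Mgen m s) x‖
          + (q:ℝ) * ‖vilenkinDirichlet m (t * Mgen m s) x‖ := by
      refine (norm_add_le _ _).trans ?_
      rw [norm_mul, Complex.norm_natCast]
    have h2 : ‖rademacher m s x ^ t * Fk m q x‖ = ‖Fk m q x‖ := by
      rw [norm_mul, norm_pow, abs_rademacher m hm s x, one_pow, one_mul]
    linarith
  -- numerics
  set dd := ‖vilenkinDirichlet m (Mgen m s) x‖ with hdd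
  set ff := ‖Fk m (Mgen m s) x‖ with hff
  have hd0 : 0 ≤ dd := norm_nonneg _
  have hf0 : 0 ≤ ff := norm_nonneg _
  have hT : (t:ℝ) ≤ B := by
    have : m s ≤ B := hB s
    exact_mod_cast le_of_lt (lt_of_lt_of_le htm this)
  have hT0 : (0:ℝ) ≤ t := by positivity
  have hQ : (q:ℝ) ≤ Mgen m s := by exact_mod_cast hq.le
  have hQ0 : (0:ℝ) ≤ q := by positivity
  have hM0 : (0:ℝ) ≤ Mgen m s := by positivity
  have hB2 : (2:ℝ) ≤ B := by
    have := hm 0; have := hB 0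
    exact_mod_cast by omega
  have hDtq := hDt t htm.le
  have c1 : (Mgen m s : ℝ) * ((t:ℝ) * t * dd) ≤ (B:ℝ) * B * Mgen m s * dd := by
    have h1 : (t:ℝ) * t ≤ (B:ℝ) * B := mul_le_mul hT hT hT0 (by linarith)
    calc (Mgen m s : ℝ) * ((t:ℝ) * t * dd) = ((t:ℝ)*t) * ((Mgen m s : ℝ) * dd) := by ring
    _ ≤ ((B:ℝ)*B) * ((Mgen m s : ℝ) * dd) :=
        mul_le_mul_of_nonneg_right h1 (by positivity)
    _ = (B:ℝ) * B * Mgen m s * dd := by ring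
  have c2 : (q:ℝ) * ((t:ℝ) * dd) ≤ (B:ℝ) * B * Mgen m s * dd := by
    have h1 : (q:ℝ) * t ≤ (Mgen m s : ℝ) * B := mul_le_mul hQ hT hT0 hM0
    calc (q:ℝ) * ((t:ℝ) * dd) = ((q:ℝ)*t) * dd := by ring
    _ ≤ ((Mgen m s : ℝ) * B) * dd := mul_le_mul_of_nonneg_right h1 hd0
    _ = (1:ℝ) * ((B:ℝ) * Mgen m s * dd) := by ring
    _ ≤ (B:ℝ) * ((B:ℝ) * Mgen m s * dd) :=
        mul_le_mul_of_nonneg_right (by linarith) (by positivity)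
    _ = (B:ℝ) * B * Mgen m s * dd := by ring
  have c3 : (t:ℝ) * ff ≤ (B:ℝ) * ff := mul_le_mul_of_nonneg_right hT hf0
  have c4 : (q:ℝ) * ‖vilenkinDirichlet m (t * Mgen m s) x‖
      ≤ (q:ℝ) * ((t:ℝ) * dd) := mul_le_mul_of_nonneg_left hDtq hQ0
  have hgoal : 2 * (B:ℝ)^2 * Mgen m s * dd = (B:ℝ)*B*Mgen m s*dd + (B:ℝ)*B*Mgen m s*dd := by
    ring
  linarith

lemma F_master {B : ℕ} (hm : ∀ k, 2 ≤ m k) (hB : ∀ k, m k ≤ B) (x : VilGroup m) :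
    ∀ s n : ℕ, n < Mgen m (s+1) →
    ‖Fk m n x‖ ≤ ∑ i ∈ Finset.range (s+1),
      (2 * (B:ℝ)^2 * Mgen m i * ‖vilenkinDirichlet m (Mgen m i) x‖
        + (B:ℝ) * ‖Fk m (Mgen m i) x‖) := by
  intro s
  induction s with
  | zero =>
    intro n hn
    rw [Finset.sum_range_one]
    rcases Nat.eq_zero_or_pos n with h0 | h1
    · subst h0
      have : Fk m 0 x = 0 := by simp [Fk]
      rw [this, norm_zero]
      positivity
    · have hs1 : Mgen m 0 ≤ n := h1
      have hstep := F_step m hm hB x hs1 hn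
      have hmod : n % Mgen m 0 = 0 := by
        show n % 1 = 0
        omega
      rw [hmod] at hstep
      have hz : Fk m 0 x = 0 := by simp [Fk]
      rw [hz, norm_zero] at hstep
      linarith
  | succ s ih =>
    intro n hn
    by_cases h : n < Mgen m (s+1)
    · refine (ih n h).trans ?_
      conv_rhs => rw [Finset.sum_range_succ]
      have h0 : (0:ℝ) ≤ 2 * (B:ℝ)^2 * Mgen m (s+1) *
          ‖vilenkinDirichlet m (Mgen m (s+1)) x‖
          + (B:ℝ) * ‖Fk m (Mgen m (s+1)) x‖ := by positivity
      linarith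
    · push_neg at h
      have hstep := F_step m hm hB x h hn
      have hmod : n % Mgen m (s+1) < Mgen m (s+1) := Nat.mod_lt _ (Mpos m hm _)
      have hih := ih _ hmod
      rw [Finset.sum_range_succ]
      linarith

lemma sum_M_le (hm : ∀ k, 2 ≤ m k) (j : ℕ) :
    (∑ i ∈ Finset.range (j+1), (Mgen m i : ℝ)) ≤ 2 * Mgen m j := by
  induction j with
  | zero => simp [Mgen]
  | succ j ih =>
    rw [Finset.sum_range_succ]
    have h1 : 2 * (Mgen m j : ℝ) ≤ Mgen m (j+1) := by
      have : 2 * Mgen m j ≤ m j * Mgen m j := Nat.mul_le_mul_right _ (hm j)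
      exact_mod_cast this
    linarith

lemma sum_ite_range {k s : ℕ} (hks : k ≤ s) (f : ℕ → ℝ) :
    (∑ i ∈ Finset.range (s+1), (if i ≤ k then f i else 0)) = ∑ i ∈ Finset.range (k+1), f i := by
  rw [← Finset.sum_filter]
  congr 1
  ext i
  simp only [Finset.mem_filter, Finset.mem_range]
  omega

end Master

section Final
variable (m : ℕ → ℕ)

lemma exists_s (hm : ∀ k, 2 ≤ m k) {n : ℕ} (h1 : 1 ≤ n) :
    ∃ s, Mgen m s ≤ n ∧ n < Mgen m (s+1) := by
  have hex : ∃ i, n < Mgen m i := by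
    refine ⟨n+1, lt_of_lt_of_le ?_ (two_pow_le_M m hm (n+1))⟩
    calc n < 2^n := Nat.lt_two_pow_self
    _ ≤ 2^(n+1) := Nat.pow_le_pow_right (by omega) (by omega)
  classical
  have hi0 : n < Mgen m (Nat.find hex) := Nat.find_spec hex
  have hpos : Nat.find hex ≠ 0 := by
    intro h
    rw [h] at hi0
    simp [Mgen] at hi0
    omega
  refine ⟨Nat.find hex - 1, ?_, ?_⟩
  · by_contra hc
    push_neg at hc
    exact Nat.find_min hex (show Nat.find hex - 1 < Nat.find hex by omega) hc
  · have he : Nat.find hex - 1 + 1 = Nat.find hex := by omega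
    rw [he]
    exact hi0

lemma M_le_M (hm : ∀ k, 2 ≤ m k) {j i : ℕ} (h : j ≤ i) : Mgen m j ≤ Mgen m i :=
  Nat.le_of_dvd (Mpos m hm i) (M_dvd_M m h)

lemma abs_D_M_le (hm : ∀ k, 2 ≤ m k) (i : ℕ) (x : VilGroup m) :
    ‖vilenkinDirichlet m (Mgen m i) x‖ ≤ (Mgen m i : ℝ) := by
  rw [D_M m hm i x]
  split_ifs
  · rw [Complex.norm_natCast]
  · rw [norm_zero]; positivity

lemma abs_D_M_zero (hm : ∀ k, 2 ≤ m k) {i t : ℕ} (x : VilGroup m) (ht : t < i)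
    (hxt : x t ≠ 0) :
    ‖vilenkinDirichlet m (Mgen m i) x‖ = 0 := by
  rw [D_M m hm i x, if_neg (fun hc => hxt (hc t ht)), norm_zero]

lemma bound_KL {B : ℕ} (hm : ∀ k, 2 ≤ m k) (hB : ∀ k, m k ≤ B) {N k l : ℕ}
    (hkl : k < l) (hlN : l < N) (x : VilGroup m)
    (hx0 : ∀ j < k, x j = 0) (hxk : x k ≠ 0) (hmid : ∀ j, k < j → j < l → x j = 0)
    (hxl : x l ≠ 0) {n : ℕ} (hn : Mgen m N < n) :
    ‖Fk m n x‖ ≤ 8 * (B:ℝ)^2 * Mgen m k * Mgen m l := by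
  have hBB : (2:ℝ) ≤ B := by
    have h1 := hm 0; have h2 := hB 0
    exact_mod_cast by omega
  have h1n : 1 ≤ n := le_trans (Mpos m hm N) hn.le
  obtain ⟨s, hs1, hs2⟩ := exists_s m hm h1n
  have hNs : N ≤ s := by
    by_contra h
    push_neg at h
    have : Mgen m (s+1) ≤ Mgen m N := M_le_M m hm (by omega)
    omega
  have hks : k ≤ s := by omega
  have hls : l ≤ s := by omega
  refine (F_master m hm hB x s n hs2).trans ?_
  have hterm : ∀ i ∈ Finset.range (s+1),
      2 * (B:ℝ)^2 * Mgen m i * ‖vilenkinDirichlet m (Mgen m i) x‖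
        + (B:ℝ) * ‖Fk m (Mgen m i) x‖
      ≤ (if i ≤ k then 3 * (B:ℝ)^2 * Mgen m k * Mgen m i else 0)
        + (if i ≤ l then (B:ℝ)^2 * Mgen m k * Mgen m i else 0) := by
    intro i _
    by_cases hik : i ≤ k
    · rw [if_pos hik, if_pos (by omega)]
      have hMik : (Mgen m i : ℝ) ≤ Mgen m k := by exact_mod_cast M_le_M m hm hik
      have hMi0 : (0:ℝ) ≤ Mgen m i := by positivity
      have e1 : 2 * (B:ℝ)^2 * Mgen m i * ‖vilenkinDirichlet m (Mgen m i) x‖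
          ≤ 2 * (B:ℝ)^2 * Mgen m i * Mgen m i :=
        mul_le_mul_of_nonneg_left (abs_D_M_le m hm i x) (by positivity)
      have e2 : (B:ℝ) * ‖Fk m (Mgen m i) x‖ ≤ (B:ℝ) * ((Mgen m i:ℝ))^2 :=
        mul_le_mul_of_nonneg_left (abs_Fk_le m hm (Mgen m i) x) (by positivity)
      have e3 : 2 * (B:ℝ)^2 * Mgen m i * Mgen m i ≤ 2 * (B:ℝ)^2 * Mgen m k * Mgen m i := by
        have := mul_le_mul_of_nonneg_right hMik hMi0
        nlinarith [this]
      have e4 : (B:ℝ) * ((Mgen m i:ℝ))^2 ≤ (B:ℝ)^2 * Mgen m k * Mgen m i := by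
        have f1 : (Mgen m i:ℝ) * (Mgen m i) ≤ (Mgen m k : ℝ) * (Mgen m i) :=
          mul_le_mul_of_nonneg_right hMik hMi0
        calc (B:ℝ) * ((Mgen m i:ℝ))^2 = (B:ℝ) * ((Mgen m i:ℝ) * Mgen m i) := by ring
        _ ≤ (B:ℝ) * ((Mgen m k:ℝ) * Mgen m i) :=
            mul_le_mul_of_nonneg_left f1 (by positivity)
        _ = 1 * ((B:ℝ) * ((Mgen m k:ℝ) * Mgen m i)) := by ring
        _ ≤ (B:ℝ) * ((B:ℝ) * ((Mgen m k:ℝ) * Mgen m i)) := by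
            refine mul_le_mul_of_nonneg_right (by linarith) ?_
            positivity
        _ = (B:ℝ)^2 * Mgen m k * Mgen m i := by ring
      have e5 : (0:ℝ) ≤ (B:ℝ)^2 * Mgen m k * Mgen m i := by positivity
      linarith [e1, e2, e3, e4, e5]
    · push_neg at hik
      rw [if_neg (by omega)]
      have hD0 : ‖vilenkinDirichlet m (Mgen m i) x‖ = 0 :=
        abs_D_M_zero m hm x hik hxk
      rw [hD0, mul_zero, zero_add]
      by_cases hil : i ≤ l
      · rw [if_pos hil]
        have hsingle : ‖Fk m (Mgen m i) x‖ ≤ (B:ℝ) * Mgen m i * Mgen m k := by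
          refine Fk_M_single m hm hB x hik hxk ?_
          intro j hj hjk
          rcases lt_trichotomy j k with h | h | h
          · exact hx0 j h
          · exact absurd h hjk
          · exact hmid j h (by omega)
        calc (B:ℝ) * ‖Fk m (Mgen m i) x‖
            ≤ (B:ℝ) * ((B:ℝ) * Mgen m i * Mgen m k) :=
              mul_le_mul_of_nonneg_left hsingle (by positivity)
        _ = 0 + (B:ℝ)^2 * Mgen m k * Mgen m i := by ring
      · rw [if_neg hil]
        push_neg at hil
        have hz : Fk m (Mgen m i) x = 0 :=
          Fk_M_two_nonzero m hm x hkl hil hxk hxl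
        rw [hz, norm_zero, mul_zero]
        norm_num
  refine (Finset.sum_le_sum hterm).trans ?_
  rw [Finset.sum_add_distrib,
    sum_ite_range hks (fun i => 3 * (B:ℝ)^2 * Mgen m k * Mgen m i),
    sum_ite_range hls (fun i => (B:ℝ)^2 * Mgen m k * Mgen m i)]
  have hsum1 : (∑ i ∈ Finset.range (k+1), 3 * (B:ℝ)^2 * Mgen m k * Mgen m i)
      = 3 * (B:ℝ)^2 * Mgen m k * ∑ i ∈ Finset.range (k+1), (Mgen m i : ℝ) := by
    rw [Finset.mul_sum]
  have hsum2 : (∑ i ∈ Finset.range (l+1), (B:ℝ)^2 * Mgen m k * Mgen m i)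
      = (B:ℝ)^2 * Mgen m k * ∑ i ∈ Finset.range (l+1), (Mgen m i : ℝ) := by
    rw [Finset.mul_sum]
  rw [hsum1, hsum2]
  have g1 := sum_M_le m hm k
  have g2 := sum_M_le m hm l
  have hMkl : (Mgen m k : ℝ) ≤ Mgen m l := by exact_mod_cast M_le_M m hm hkl.le
  have hMk0 : (0:ℝ) ≤ Mgen m k := by positivity
  have hc1 : 3 * (B:ℝ)^2 * Mgen m k * (∑ i ∈ Finset.range (k+1), (Mgen m i : ℝ))
      ≤ 3 * (B:ℝ)^2 * Mgen m k * (2 * Mgen m k) :=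
    mul_le_mul_of_nonneg_left g1 (by positivity)
  have hc2 : (B:ℝ)^2 * Mgen m k * (∑ i ∈ Finset.range (l+1), (Mgen m i : ℝ))
      ≤ (B:ℝ)^2 * Mgen m k * (2 * Mgen m l) :=
    mul_le_mul_of_nonneg_left g2 (by positivity)
  have hc3 : 3 * (B:ℝ)^2 * Mgen m k * (2 * Mgen m k) ≤ 6 * (B:ℝ)^2 * Mgen m k * Mgen m l := by
    nlinarith [mul_le_mul_of_nonneg_left hMkl hMk0, hBB, hMk0]
  nlinarith [hc1, hc2, hc3]

lemma bound_KN {B : ℕ} (hm : ∀ k, 2 ≤ m k) (hB : ∀ k, m k ≤ B) {N k : ℕ}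
    (hkN : k < N) (x : VilGroup m)
    (hx0 : ∀ j < k, x j = 0) (hxk : x k ≠ 0) {n : ℕ} (hn : Mgen m N < n) :
    ‖Fk m n x‖ ≤ 8 * (B:ℝ)^2 * Mgen m k * n := by
  have hBB : (2:ℝ) ≤ B := by
    have h1 := hm 0; have h2 := hB 0
    exact_mod_cast by omega
  have h1n : 1 ≤ n := le_trans (Mpos m hm N) hn.le
  obtain ⟨s, hs1, hs2⟩ := exists_s m hm h1n
  have hNs : N ≤ s := by
    by_contra h
    push_neg at h
    have : Mgen m (s+1) ≤ Mgen m N := M_le_M m hm (by omega)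
    omega
  have hks : k ≤ s := by omega
  refine (F_master m hm hB x s n hs2).trans ?_
  have hterm : ∀ i ∈ Finset.range (s+1),
      2 * (B:ℝ)^2 * Mgen m i * ‖vilenkinDirichlet m (Mgen m i) x‖
        + (B:ℝ) * ‖Fk m (Mgen m i) x‖
      ≤ (if i ≤ k then 3 * (B:ℝ)^2 * Mgen m k * Mgen m i else 0)
        + (B:ℝ)^2 * Mgen m k * Mgen m i := by
    intro i _
    by_cases hik : i ≤ k
    · rw [if_pos hik]
      have hMik : (Mgen m i : ℝ) ≤ Mgen m k := by exact_mod_cast M_le_M m hm hik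
      have hMi0 : (0:ℝ) ≤ Mgen m i := by positivity
      have e1 : 2 * (B:ℝ)^2 * Mgen m i * ‖vilenkinDirichlet m (Mgen m i) x‖
          ≤ 2 * (B:ℝ)^2 * Mgen m i * Mgen m i :=
        mul_le_mul_of_nonneg_left (abs_D_M_le m hm i x) (by positivity)
      have e2 : (B:ℝ) * ‖Fk m (Mgen m i) x‖ ≤ (B:ℝ) * ((Mgen m i:ℝ))^2 :=
        mul_le_mul_of_nonneg_left (abs_Fk_le m hm (Mgen m i) x) (by positivity)
      have e3 : 2 * (B:ℝ)^2 * Mgen m i * Mgen m i ≤ 2 * (B:ℝ)^2 * Mgen m k * Mgen m i := by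
        nlinarith [mul_le_mul_of_nonneg_right hMik hMi0]
      have e4 : (B:ℝ) * ((Mgen m i:ℝ))^2 ≤ (B:ℝ)^2 * Mgen m k * Mgen m i := by
        have f1 : (Mgen m i:ℝ) * (Mgen m i) ≤ (Mgen m k : ℝ) * (Mgen m i) :=
          mul_le_mul_of_nonneg_right hMik hMi0
        calc (B:ℝ) * ((Mgen m i:ℝ))^2 = (B:ℝ) * ((Mgen m i:ℝ) * Mgen m i) := by ring
        _ ≤ (B:ℝ) * ((Mgen m k:ℝ) * Mgen m i) :=
            mul_le_mul_of_nonneg_left f1 (by positivity)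
        _ = 1 * ((B:ℝ) * ((Mgen m k:ℝ) * Mgen m i)) := by ring
        _ ≤ (B:ℝ) * ((B:ℝ) * ((Mgen m k:ℝ) * Mgen m i)) := by
            refine mul_le_mul_of_nonneg_right (by linarith) ?_
            positivity
        _ = (B:ℝ)^2 * Mgen m k * Mgen m i := by ring
      have e5 : (0:ℝ) ≤ (B:ℝ)^2 * Mgen m k * Mgen m i := by positivity
      linarith [e1, e2, e3, e4, e5]
    · push_neg at hik
      rw [if_neg (by omega)]
      have hD0 : ‖vilenkinDirichlet m (Mgen m i) x‖ = 0 :=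
        abs_D_M_zero m hm x hik hxk
      rw [hD0, mul_zero, zero_add, zero_add]
      by_cases hz : ∀ j < i, j ≠ k → x j = 0
      · have hsingle : ‖Fk m (Mgen m i) x‖ ≤ (B:ℝ) * Mgen m i * Mgen m k :=
          Fk_M_single m hm hB x hik hxk hz
        calc (B:ℝ) * ‖Fk m (Mgen m i) x‖
            ≤ (B:ℝ) * ((B:ℝ) * Mgen m i * Mgen m k) :=
              mul_le_mul_of_nonneg_left hsingle (by positivity)
        _ = (B:ℝ)^2 * Mgen m k * Mgen m i := by ring
      · push_neg at hz
        obtain ⟨j, hji, hjk, hxj⟩ := hz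
        have hkj : k < j := by
          rcases lt_trichotomy j k with h | h | h
          · exact absurd (hx0 j h) hxj
          · exact absurd h hjk
          · exact h
        have hzero : Fk m (Mgen m i) x = 0 :=
          Fk_M_two_nonzero m hm x hkj hji hxk hxj
        rw [hzero, norm_zero, mul_zero]
        positivity
  refine (Finset.sum_le_sum hterm).trans ?_
  rw [Finset.sum_add_distrib,
    sum_ite_range hks (fun i => 3 * (B:ℝ)^2 * Mgen m k * Mgen m i)]
  have hsum1 : (∑ i ∈ Finset.range (k+1), 3 * (B:ℝ)^2 * Mgen m k * Mgen m i)
      = 3 * (B:ℝ)^2 * Mgen m k * ∑ i ∈ Finset.range (k+1), (Mgen m i : ℝ) := by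
    rw [Finset.mul_sum]
  have hsum2 : (∑ i ∈ Finset.range (s+1), (B:ℝ)^2 * Mgen m k * Mgen m i)
      = (B:ℝ)^2 * Mgen m k * ∑ i ∈ Finset.range (s+1), (Mgen m i : ℝ) := by
    rw [Finset.mul_sum]
  rw [hsum1, hsum2]
  have g1 := sum_M_le m hm k
  have g2 := sum_M_le m hm s
  have hMks : (Mgen m k : ℝ) ≤ Mgen m s := by exact_mod_cast M_le_M m hm hks
  have hMsn : (Mgen m s : ℝ) ≤ n := by exact_mod_cast hs1
  have hMk0 : (0:ℝ) ≤ Mgen m k := by positivity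
  have hc1 : 3 * (B:ℝ)^2 * Mgen m k * (∑ i ∈ Finset.range (k+1), (Mgen m i : ℝ))
      ≤ 3 * (B:ℝ)^2 * Mgen m k * (2 * Mgen m k) :=
    mul_le_mul_of_nonneg_left g1 (by positivity)
  have hc2 : (B:ℝ)^2 * Mgen m k * (∑ i ∈ Finset.range (s+1), (Mgen m i : ℝ))
      ≤ (B:ℝ)^2 * Mgen m k * (2 * Mgen m s) :=
    mul_le_mul_of_nonneg_left g2 (by positivity)
  have hc3 : 3 * (B:ℝ)^2 * Mgen m k * (2 * Mgen m k) ≤ 6 * (B:ℝ)^2 * Mgen m k * n := by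
    have h1 : (Mgen m k : ℝ) ≤ n := le_trans hMks hMsn
    nlinarith [mul_le_mul_of_nonneg_left h1 hMk0, hBB]
  have hc4 : (B:ℝ)^2 * Mgen m k * (2 * Mgen m s) ≤ 2 * (B:ℝ)^2 * Mgen m k * n := by
    nlinarith [mul_le_mul_of_nonneg_left hMsn hMk0, hBB]
  nlinarith [hc1, hc2, hc3, hc4]

end Final

/-- **Uniform pointwise bounds for the maximal Fejér kernel.**
On a bounded Vilenkin group there is an absolute constant `c` such that for all
`0 ≤ k < l ≤ N - 1` and `x ∈ I_N^{k,l}`,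
`sup_{n > M_N} |K_n^ψ(x)| ≤ c M_l M_k / M_N`, while for `x ∈ I_N^{k,N}`,
`sup_{n > M_N} |K_n^ψ(x)| ≤ c M_k`. -/
theorem vilenkinFejer_maximal_pointwise_bounds
    (m : ℕ → ℕ) (hm : ∀ k, 2 ≤ m k) (hbd : ∃ B, ∀ k, m k ≤ B) :
    ∃ c : ℝ,
      (∀ N k l : ℕ, k < l → l < N → ∀ x ∈ cylKL m N k l,
        (⨆ n : {n : ℕ // Mgen m N < n}, ‖vilenkinFejer m n.1 x‖) ≤
          c * (Mgen m l : ℝ) * (Mgen m k : ℝ) / (Mgen m N : ℝ)) ∧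
      (∀ N k : ℕ, k < N → ∀ x ∈ cylKN m N k,
        (⨆ n : {n : ℕ // Mgen m N < n}, ‖vilenkinFejer m n.1 x‖) ≤
          c * (Mgen m k : ℝ)) := by
  obtain ⟨B, hB⟩ := hbd
  have hBB : (2:ℝ) ≤ B := by
    have h1 := hm 0; have h2 := hB 0
    exact_mod_cast by omega
  refine ⟨8 * (B:ℝ)^2, ?_, ?_⟩
  · intro N k l hkl hlN x hx
    obtain ⟨hx0, hxk, hmid, hxl⟩ := hx
    have hMN : (0:ℝ) < Mgen m N := by exact_mod_cast Mpos m hm N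
    refine Real.iSup_le ?_ (by positivity)
    rintro ⟨n, hn⟩
    have hnn : 0 < n := lt_of_le_of_lt (Nat.zero_le _) hn
    have hn0 : (0:ℝ) < n := by exact_mod_cast hnn
    have hfe : ‖vilenkinFejer m n x‖ = ‖Fk m n x‖ / n := by
      show ‖(1/(n:ℂ)) * Fk m n x‖ = _
      rw [norm_mul, norm_div, norm_one, Complex.norm_natCast]
      ring
    show ‖vilenkinFejer m n x‖ ≤ _
    rw [hfe]
    have hb := bound_KL m hm hB hkl hlN x hx0 hxk hmid hxl hn
    have hMNn : (Mgen m N : ℝ) ≤ n := by exact_mod_cast hn.le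
    calc ‖Fk m n x‖ / n
        ≤ (8 * (B:ℝ)^2 * Mgen m k * Mgen m l) / Mgen m N :=
          div_le_div₀ (by positivity) hb hMN hMNn
    _ = 8 * (B:ℝ)^2 * Mgen m l * Mgen m k / Mgen m N := by ring
  · intro N k hkN x hx
    obtain ⟨hx0, hxk, -⟩ := hx
    refine Real.iSup_le ?_ (by positivity)
    rintro ⟨n, hn⟩
    have hnn : 0 < n := lt_of_le_of_lt (Nat.zero_le _) hn
    have hn0 : (0:ℝ) < n := by exact_mod_cast hnn
    have hfe : ‖vilenkinFejer m n x‖ = ‖Fk m n x‖ / n := by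
      show ‖(1/(n:ℂ)) * Fk m n x‖ = _
      rw [norm_mul, norm_div, norm_one, Complex.norm_natCast]
      ring
    show ‖vilenkinFejer m n x‖ ≤ _
    rw [hfe, div_le_iff₀ hn0]
    exact bound_KN m hm hB hkN x hx0 hxk hn
end
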